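/- Fix r ≥ 1, n ∈ ℕ, B ∈ ℝ with B ≠ 0 and B ≠ (−1)^r, natural numbers N_1, …, N_r with n ≤ N_k for all k, and real numbers γ_1, …, γ_r such that γ_j − γ_k is not an integer whenever j ≠ k. Define P : ℝ → ℝ by P(x) = Σ_{j=0}^{n} (−1)^j C(n,j) B^(−j) · Π_{k=1}^{r} [ Π_{i=0}^{j−1} (x − γ_k − i) · Π_{i=0}^{n−j−1} (N_k − x + γ_k − i) ]. Then: (i) P is the evaluation of a real polynomial of degree exactly r·n; (ii) for every index l ∈ {1,…,r} and every natural number k < n, Σ_{m=0}^{N_l} P(γ_l + m) · (γ_l + m)^k · B^m · Π_{k'=1}^{r} [ 1/(Γ(m + γ_l − γ_{k'} + 1) · Γ(N_{k'} − m − γ_l + γ_{k'} + 1)) ] = 0. -/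

import Mathlib

open Finset Polynomial

private lemma gamma_int_nonpos {z : ℤ} (hz : z ≤ 0) : Real.Gamma (z : ℝ) = 0 := by
  obtain ⟨u, hu⟩ : ∃ u : ℕ, z = -(u : ℤ) := ⟨(-z).toNat, by omega⟩
  rw [hu]; push_cast
  exact Real.Gamma_neg_nat_eq_zero u

private lemma gkey_ne (a : ℝ) : ∀ (j : ℕ), (∀ i ∈ Finset.range j, a - (i : ℝ) ≠ 0) →
    (∏ i ∈ Finset.range j, (a - (i : ℝ))) * (1 / Real.Gamma (a + 1))
      = 1 / Real.Gamma (a + 1 - j) := by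
  intro j
  induction j with
  | zero => simp
  | succ j ih =>
    intro h
    have hne : a - (j : ℝ) ≠ 0 := h j (by simp)
    have ih' := ih (fun i hi => h i (Finset.mem_range.2 (Nat.lt_succ_of_lt (Finset.mem_range.1 hi))))
    rw [Finset.prod_range_succ, mul_right_comm, ih']
    have harg : a + 1 - ((j : ℕ) + 1 : ℕ) = (a - j) := by push_cast; ring
    rw [harg]
    have harg2 : a + 1 - (j : ℝ) = (a - j) + 1 := by ring
    rw [harg2, Real.Gamma_add_one hne]
    by_cases hΓ : Real.Gamma (a - (j : ℝ)) = 0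
    · simp [hΓ]
    · field_simp

private lemma gkey (a : ℝ) (j : ℕ)
    (h : (∀ i ∈ Finset.range j, a - (i : ℝ) ≠ 0) ∨ ∃ m : ℕ, a = (m : ℝ)) :
    (∏ i ∈ Finset.range j, (a - (i : ℝ))) * (1 / Real.Gamma (a + 1))
      = 1 / Real.Gamma (a + 1 - j) := by
  rcases h with h | ⟨m, rfl⟩
  · exact gkey_ne a j h
  by_cases hj : j ≤ m
  · refine gkey_ne _ j fun i hi => ?_
    have h1 : i < m := lt_of_lt_of_le (Finset.mem_range.1 hi) hj
    have h2 : (i : ℝ) < m := by exact_mod_cast h1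
    intro hc; linarith
  · push_neg at hj
    have hz : (∏ i ∈ Finset.range j, ((m : ℝ) - (i : ℝ))) = 0 :=
      Finset.prod_eq_zero (Finset.mem_range.2 hj) (by simp)
    rw [hz, zero_mul]
    have : ((m : ℝ) + 1 - j) = ((m + 1 - j : ℤ) : ℝ) := by push_cast; ring
    rw [this, gamma_int_nonpos (by omega), div_zero]

private lemma findiff : ∀ (n : ℕ) (p : Polynomial ℝ), p.degree < (n : ℕ) → ∀ x : ℝ,
    ∑ j ∈ Finset.range (n + 1), (-1 : ℝ) ^ j * (n.choose j : ℝ) * p.eval (x + j) = 0 := by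
  intro n
  induction n with
  | zero =>
    intro p hp x
    have : p = 0 := by
      rw [← Polynomial.degree_eq_bot]
      exact Nat.WithBot.lt_zero_iff.1 (by exact_mod_cast hp)
    simp [this]
  | succ n ih =>
    intro p hp x
    by_cases hp0 : p = 0
    · simp [hp0]
    set q : Polynomial ℝ := p.comp (X + C 1) with hq
    have hq0 : q ≠ 0 := fun hc => hp0 (by
      rcases Polynomial.comp_eq_zero_iff.1 hc with h | ⟨h1, h2⟩
      · exact h
      · exfalso; simp at h2)
    have hnd : q.natDegree = p.natDegree := by
      rw [hq, Polynomial.natDegree_comp, Polynomial.natDegree_X_add_C, mul_one]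
    have hdeg : p.degree = q.degree := by
      rw [Polynomial.degree_eq_natDegree hp0, Polynomial.degree_eq_natDegree hq0, hnd]
    have hlc : p.leadingCoeff = q.leadingCoeff := by
      rw [hq, Polynomial.leadingCoeff_comp (by rw [Polynomial.natDegree_X_add_C]; exact one_ne_zero),
        Polynomial.leadingCoeff_X_add_C, one_pow, mul_one]
    have hple : p.degree ≤ (n : ℕ) := by
      have : p.natDegree < n + 1 := (Polynomial.natDegree_lt_iff_degree_lt hp0).2 hp
      exact Polynomial.degree_le_of_natDegree_le (by omega)
    have hsub : (p - q).degree < (n : ℕ) :=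
      lt_of_lt_of_le (Polynomial.degree_sub_lt hdeg hp0 hlc) hple
    have hfg : ∀ j ∈ Finset.range (n + 1), (-1 : ℝ) ^ j * (n.choose j : ℝ) * (p - q).eval (x + j)
        = (-1 : ℝ) ^ j * (n.choose j : ℝ) * p.eval (x + j)
          - (-1 : ℝ) ^ j * (n.choose j : ℝ) * p.eval (x + j + 1) := by
      intro j _
      simp [hq, Polynomial.eval_comp]
      ring
    have ihx := ih (p - q) hsub x
    rw [Finset.sum_congr rfl hfg, Finset.sum_sub_distrib] at ihx
    rw [Finset.sum_range_succ']
    have h2 : ∀ j ∈ Finset.range (n + 1),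
        (-1 : ℝ) ^ (j + 1) * (((n+1).choose (j+1)) : ℝ) * p.eval (x + (j + 1 : ℕ))
        = ((-1 : ℝ) ^ (j+1) * ((n.choose (j+1)) : ℝ) * p.eval (x + ((j+1 : ℕ) : ℝ)))
          - (-1 : ℝ) ^ j * (n.choose j : ℝ) * p.eval (x + j + 1) := by
      intro j _
      rw [Nat.choose_succ_succ]
      push_cast
      ring_nf
      rw [show 1 + j = j.succ by omega]
      ring
    rw [Finset.sum_congr rfl h2, Finset.sum_sub_distrib]
    have h3 : (∑ j ∈ Finset.range (n+1),
          ((-1 : ℝ) ^ (j+1) * ((n.choose (j+1)) : ℝ) * p.eval (x + ((j+1 : ℕ) : ℝ))))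
          + (-1 : ℝ) ^ 0 * ((n.choose 0) : ℝ) * p.eval (x + ((0 : ℕ) : ℝ))
        = ∑ j ∈ Finset.range (n+2), (-1 : ℝ) ^ j * ((n.choose j) : ℝ) * p.eval (x + j) :=
      (Finset.sum_range_succ' (fun j => (-1 : ℝ) ^ j * ((n.choose j) : ℝ) * p.eval (x + j)) (n+1)).symm
    have h4 : ∑ j ∈ Finset.range (n+2), (-1 : ℝ) ^ j * ((n.choose j) : ℝ) * p.eval (x + j)
        = ∑ j ∈ Finset.range (n+1), (-1 : ℝ) ^ j * ((n.choose j) : ℝ) * p.eval (x + j) := by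
      rw [Finset.sum_range_succ, Nat.choose_succ_self]
      simp
    simp only [Nat.cast_zero, add_zero, pow_zero, Nat.choose_zero_right, Nat.cast_one, one_mul,
      Nat.cast_ofNat] at h3 ⊢
    linarith [h3, h4, ihx]


private lemma prodXsubC (s : ℕ) (c : ℕ → ℝ) :
    (∏ i ∈ Finset.range s, (X - C (c i)) : Polynomial ℝ).leadingCoeff = 1 ∧
    (∏ i ∈ Finset.range s, (X - C (c i)) : Polynomial ℝ).natDegree = s := by
  constructor
  · rw [Polynomial.leadingCoeff_prod]
    exact Finset.prod_eq_one fun i _ => (Polynomial.monic_X_sub_C (c i)).leadingCoeff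
  · rw [Polynomial.natDegree_prod _ _ fun i _ => Polynomial.X_sub_C_ne_zero (c i)]
    simp [Polynomial.natDegree_X_sub_C]

private lemma prodCsubX (s : ℕ) (c : ℕ → ℝ) :
    (∏ i ∈ Finset.range s, (C (c i) - X) : Polynomial ℝ).leadingCoeff = (-1 : ℝ) ^ s ∧
    (∏ i ∈ Finset.range s, (C (c i) - X) : Polynomial ℝ).natDegree = s := by
  have h : ∀ i : ℕ, (C (c i) - X : Polynomial ℝ) = -(X - C (c i)) := fun i => by ring
  constructor
  · rw [Polynomial.leadingCoeff_prod, Finset.prod_congr rfl fun i _ => by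
      rw [h i, Polynomial.leadingCoeff_neg, (Polynomial.monic_X_sub_C (c i)).leadingCoeff]]
    simp
  · rw [Polynomial.natDegree_prod _ _ fun i _ => by
      rw [h i]; exact neg_ne_zero.2 (Polynomial.X_sub_C_ne_zero (c i))]
    rw [Finset.sum_congr rfl fun i (_ : i ∈ Finset.range s) => by
      rw [h i, Polynomial.natDegree_neg, Polynomial.natDegree_X_sub_C]]
    simp

/-- The paper's main Theorem specialized to a product of `r` Kravchuk weights on shifted
lattices `γ_k + {0,…,N_k}`: under Condition MD2 (`B ≠ (−1)^r`) the Rodrigues polynomial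
`P` has degree exactly `r·n` and satisfies the multiple orthogonality relations. -/
theorem stmt_7 (r : ℕ) (hr : 1 ≤ r) (n : ℕ) (B : ℝ) (hB0 : B ≠ 0) (hB1 : B ≠ (-1 : ℝ) ^ r)
    (N : Fin r → ℕ) (hnN : ∀ k : Fin r, n ≤ N k) (γ : Fin r → ℝ)
    (hγ : ∀ j k : Fin r, j ≠ k → ∀ z : ℤ, γ j - γ k ≠ (z : ℝ)) (P : ℝ → ℝ)
    (hP : ∀ x : ℝ, P x = ∑ j ∈ Finset.range (n + 1),
      (-1 : ℝ) ^ j * (n.choose j : ℝ) * B ^ (-(j : ℤ)) *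
        ∏ k : Fin r,
          ((∏ i ∈ Finset.range j, (x - γ k - (i : ℝ))) *
            ∏ i ∈ Finset.range (n - j), ((N k : ℝ) - x + γ k - (i : ℝ)))) :
    (∃ p : Polynomial ℝ, p.degree = (r * n : ℕ) ∧ ∀ x : ℝ, P x = p.eval x) ∧
    (∀ l : Fin r, ∀ k : ℕ, k < n →
      ∑ m ∈ Finset.range (N l + 1),
        P (γ l + m) * (γ l + m) ^ k * B ^ m *
          ∏ k' : Fin r,
            (1 / (Real.Gamma ((m : ℝ) + γ l - γ k' + 1) *
              Real.Gamma ((N k' : ℝ) - m - γ l + γ k' + 1))) = 0) := by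
  constructor
  · set q : ℕ → Polynomial ℝ := fun j => ∏ kk : Fin r,
        ((∏ i ∈ Finset.range j, (X - C (γ kk + i))) *
          ∏ i ∈ Finset.range (n - j), (C ((N kk : ℝ) + γ kk - i) - X)) with hqdef
    set p : Polynomial ℝ := ∑ j ∈ Finset.range (n + 1),
        C ((-1 : ℝ) ^ j * (n.choose j : ℝ) * B ^ (-(j : ℤ))) * q j with hpdef
    have hflc : ∀ (j : ℕ) (kk : Fin r),
        ((∏ i ∈ Finset.range j, (X - C (γ kk + i))) *
          ∏ i ∈ Finset.range (n - j), (C ((N kk : ℝ) + γ kk - i) - X) : Polynomial ℝ).leadingCoeff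
          = (-1 : ℝ) ^ (n - j) := by
      intro j kk
      rw [Polynomial.leadingCoeff_mul, (prodXsubC j _).1, (prodCsubX (n - j) _).1, one_mul]
    have hfnd : ∀ (j : ℕ), j ≤ n → ∀ (kk : Fin r),
        ((∏ i ∈ Finset.range j, (X - C (γ kk + i))) *
          ∏ i ∈ Finset.range (n - j), (C ((N kk : ℝ) + γ kk - i) - X) : Polynomial ℝ).natDegree
          = n := by
      intro j hjn kk
      have h1 : (∏ i ∈ Finset.range j, (X - C (γ kk + i)) : Polynomial ℝ) ≠ 0 := by
        intro hc
        have := (prodXsubC j (fun i => γ kk + i)).1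
        rw [hc] at this; simp at this
      have h2 : (∏ i ∈ Finset.range (n - j), (C ((N kk : ℝ) + γ kk - i) - X) : Polynomial ℝ) ≠ 0 := by
        intro hc
        have := (prodCsubX (n - j) (fun i => (N kk : ℝ) + γ kk - i)).1
        rw [hc] at this
        simp only [Polynomial.leadingCoeff_zero] at this
        exact (pow_ne_zero (n - j) (by norm_num : (-1 : ℝ) ≠ 0)) this.symm
      rw [Polynomial.natDegree_mul h1 h2, (prodXsubC j _).2, (prodCsubX (n - j) _).2]
      omega
    have hf0 : ∀ (j : ℕ) (kk : Fin r),
        ((∏ i ∈ Finset.range j, (X - C (γ kk + i))) *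
          ∏ i ∈ Finset.range (n - j), (C ((N kk : ℝ) + γ kk - i) - X) : Polynomial ℝ) ≠ 0 := by
      intro j kk hc
      have := hflc j kk
      rw [hc] at this
      simp only [Polynomial.leadingCoeff_zero] at this
      exact (pow_ne_zero (n - j) (by norm_num : (-1 : ℝ) ≠ 0)) this.symm
    have hqlc : ∀ j : ℕ, (q j).leadingCoeff = ((-1 : ℝ) ^ (n - j)) ^ r := by
      intro j
      rw [hqdef]
      simp only
      rw [Polynomial.leadingCoeff_prod, Finset.prod_congr rfl fun kk _ => hflc j kk]
      simp [Finset.card_univ]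
    have hqnd : ∀ j : ℕ, j ≤ n → (q j).natDegree = r * n := by
      intro j hjn
      rw [hqdef]
      simp only
      rw [Polynomial.natDegree_prod _ _ fun kk _ => hf0 j kk,
        Finset.sum_congr rfl fun kk _ => hfnd j hjn kk]
      simp [Finset.card_univ, mul_comm]
    have hcoeff : p.coeff (r * n) = ∑ j ∈ Finset.range (n + 1),
        (-1 : ℝ) ^ j * (n.choose j : ℝ) * B ^ (-(j : ℤ)) * ((-1 : ℝ) ^ (n - j)) ^ r := by
      rw [hpdef, Polynomial.finset_sum_coeff]
      refine Finset.sum_congr rfl fun j hj => ?_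
      have hjn : j ≤ n := by have := Finset.mem_range.1 hj; omega
      rw [Polynomial.coeff_C_mul, ← hqnd j hjn, Polynomial.coeff_natDegree, hqlc j]
    have hsum : ∑ j ∈ Finset.range (n + 1),
        (-1 : ℝ) ^ j * (n.choose j : ℝ) * B ^ (-(j : ℤ)) * ((-1 : ℝ) ^ (n - j)) ^ r
        = (-1 : ℝ) ^ (n * r) * ((-1 : ℝ) ^ (r + 1) * B⁻¹ + 1) ^ n := by
      rw [add_pow, Finset.mul_sum]
      refine Finset.sum_congr rfl fun j hj => ?_
      have hjn : j ≤ n := by have := Finset.mem_range.1 hj; omega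
      obtain ⟨d, hd⟩ : ∃ d, n = d + j := ⟨n - j, by omega⟩
      have hnj : n - j = d := by omega
      rw [hnj]
      subst hd
      have hB : B ^ (-(j : ℤ)) = (B⁻¹) ^ j := by
        rw [zpow_neg, zpow_natCast, inv_pow]
      have hsign : (-1 : ℝ) ^ j * ((-1 : ℝ) ^ d) ^ r
          = (-1 : ℝ) ^ ((d + j) * r) * ((-1 : ℝ) ^ (r + 1)) ^ j := by
        calc (-1 : ℝ) ^ j * ((-1 : ℝ) ^ d) ^ r = (-1 : ℝ) ^ (j + d * r) := by
              rw [← pow_mul, ← pow_add]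
          _ = (-1 : ℝ) ^ ((j + d * r) + 2 * (j * r)) := by
              rw [pow_add ((-1 : ℝ)) (j + d * r), pow_mul, neg_one_sq, one_pow, mul_one]
          _ = (-1 : ℝ) ^ ((d + j) * r + (r + 1) * j) := by
              rw [show (d + j) * r + (r + 1) * j = (j + d * r) + 2 * (j * r) by ring]
          _ = (-1 : ℝ) ^ ((d + j) * r) * ((-1 : ℝ) ^ (r + 1)) ^ j := by
              rw [pow_add, pow_mul, pow_mul]
      calc (-1 : ℝ) ^ j * ((d + j).choose j : ℝ) * B ^ (-(j : ℤ)) * ((-1 : ℝ) ^ d) ^ r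
          = ((-1 : ℝ) ^ j * ((-1 : ℝ) ^ d) ^ r) * (((d + j).choose j : ℝ) * (B⁻¹) ^ j) := by
            rw [hB]; ring
        _ = ((-1 : ℝ) ^ ((d + j) * r) * ((-1 : ℝ) ^ (r + 1)) ^ j) *
              (((d + j).choose j : ℝ) * (B⁻¹) ^ j) := by rw [hsign]
        _ = (-1 : ℝ) ^ ((d + j) * r) *
              (((-1 : ℝ) ^ (r + 1) * B⁻¹) ^ j * 1 ^ d * ((d + j).choose j : ℝ)) := by
            rw [mul_pow, one_pow]; ring
    have hne : (-1 : ℝ) ^ (n * r) * ((-1 : ℝ) ^ (r + 1) * B⁻¹ + 1) ^ n ≠ 0 := by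
      refine mul_ne_zero (pow_ne_zero _ (by norm_num)) (pow_ne_zero _ ?_)
      intro h
      apply hB1
      have h1 : (-1 : ℝ) ^ (r + 1) * B⁻¹ = -1 := by linarith
      have h2 : (-1 : ℝ) ^ (r + 1) = -B := by
        field_simp at h1
        linarith
      rw [pow_succ] at h2
      nlinarith [h2]
    have hple : p.degree ≤ (r * n : ℕ) := by
      rw [hpdef]
      refine (Polynomial.degree_sum_le _ _).trans ?_
      refine Finset.sup_le fun j hj => ?_
      have hjn : j ≤ n := by have := Finset.mem_range.1 hj; omega
      refine (Polynomial.degree_mul_le _ _).trans ?_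
      have hd1 : (C ((-1 : ℝ) ^ j * (n.choose j : ℝ) * B ^ (-(j : ℤ)))).degree ≤ 0 :=
        Polynomial.degree_C_le
      have hd2 : (q j).degree ≤ (r * n : ℕ) :=
        Polynomial.degree_le_of_natDegree_le (le_of_eq (hqnd j hjn))
      calc (C ((-1 : ℝ) ^ j * (n.choose j : ℝ) * B ^ (-(j : ℤ)))).degree + (q j).degree
          ≤ 0 + (r * n : ℕ) := add_le_add hd1 hd2
        _ = (r * n : ℕ) := zero_add _
    refine ⟨p, Polynomial.degree_eq_of_le_of_coeff_ne_zero hple ?_, ?_⟩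
    · rw [hcoeff, hsum]
      exact hne
    · intro x
      rw [hP, hpdef]
      rw [Polynomial.eval_finset_sum]
      refine Finset.sum_congr rfl fun j _ => ?_
      rw [Polynomial.eval_mul, Polynomial.eval_C, hqdef]
      simp only
      rw [Polynomial.eval_prod]
      congr 1
      refine Finset.prod_congr rfl fun kk _ => ?_
      rw [Polynomial.eval_mul, Polynomial.eval_prod, Polynomial.eval_prod]
      congr 1
      · exact Finset.prod_congr rfl fun i _ => by
          simp only [Polynomial.eval_sub, Polynomial.eval_X, Polynomial.eval_C]; ring
      · exact Finset.prod_congr rfl fun i _ => by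
          simp only [Polynomial.eval_sub, Polynomial.eval_X, Polynomial.eval_C]; ring
  · intro l k hk
    set G : ℤ → ℝ := fun t => B ^ t * ∏ k' : Fin r,
        (1 / (Real.Gamma ((t : ℝ) + γ l - γ k' + 1) *
          Real.Gamma ((N k' : ℝ) - n - t - γ l + γ k' + 1))) with hG
    have hGneg : ∀ t : ℤ, t < 0 → G t = 0 := by
      intro t ht
      have hz : (1 / (Real.Gamma ((t : ℝ) + γ l - γ l + 1) *
          Real.Gamma ((N l : ℝ) - n - t - γ l + γ l + 1))) = 0 := by
        have h1 : ((t : ℝ) + γ l - γ l + 1) = ((t + 1 : ℤ) : ℝ) := by push_cast; ring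
        rw [h1, gamma_int_nonpos (by omega), zero_mul, div_zero]
      rw [hG]
      simp only
      rw [Finset.prod_eq_zero (Finset.mem_univ l) hz, mul_zero]
    have hGbig : ∀ t : ℤ, (N l : ℤ) - n < t → G t = 0 := by
      intro t ht
      have hz : (1 / (Real.Gamma ((t : ℝ) + γ l - γ l + 1) *
          Real.Gamma ((N l : ℝ) - n - t - γ l + γ l + 1))) = 0 := by
        have h1 : ((N l : ℝ) - n - t - γ l + γ l + 1) = (((N l : ℤ) - n - t + 1 : ℤ) : ℝ) := by
          push_cast; ring
        rw [h1, gamma_int_nonpos (by omega), mul_zero, div_zero]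
      rw [hG]
      simp only
      rw [Finset.prod_eq_zero (Finset.mem_univ l) hz, mul_zero]
    have key : ∀ m ∈ Finset.range (N l + 1),
        P (γ l + m) * (γ l + m) ^ k * B ^ m *
          ∏ k' : Fin r, (1 / (Real.Gamma ((m : ℝ) + γ l - γ k' + 1) *
            Real.Gamma ((N k' : ℝ) - m - γ l + γ k' + 1)))
        = ∑ j ∈ Finset.range (n + 1),
            ((-1 : ℝ) ^ j * (n.choose j : ℝ)) * ((γ l + m) ^ k * G ((m : ℤ) - j)) := by
      intro m hm
      have hmN : m ≤ N l := by
        have := Finset.mem_range.1 hm; omega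
      rw [hP, Finset.sum_mul, Finset.sum_mul, Finset.sum_mul]
      refine Finset.sum_congr rfl fun j hj => ?_
      have hjn : j ≤ n := by have := Finset.mem_range.1 hj; omega
      have perk : ∀ k' : Fin r,
          (((∏ i ∈ Finset.range j, ((γ l + m) - γ k' - (i : ℝ))) *
            ∏ i ∈ Finset.range (n - j), ((N k' : ℝ) - (γ l + m) + γ k' - (i : ℝ)))) *
            (1 / (Real.Gamma ((m : ℝ) + γ l - γ k' + 1) *
              Real.Gamma ((N k' : ℝ) - m - γ l + γ k' + 1)))
          = 1 / (Real.Gamma ((((m : ℤ) - j : ℤ) : ℝ) + γ l - γ k' + 1) *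
              Real.Gamma ((N k' : ℝ) - n - (((m : ℤ) - j : ℤ) : ℝ) - γ l + γ k' + 1)) := by
        intro k'
        set a : ℝ := (m : ℝ) + γ l - γ k' with ha
        set b : ℝ := (N k' : ℝ) - m - γ l + γ k' with hb
        have hpa : (∏ i ∈ Finset.range j, ((γ l + m) - γ k' - (i : ℝ)))
            = ∏ i ∈ Finset.range j, (a - (i : ℝ)) :=
          Finset.prod_congr rfl fun i _ => by rw [ha]; ring
        have hpb : (∏ i ∈ Finset.range (n - j), ((N k' : ℝ) - (γ l + m) + γ k' - (i : ℝ)))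
            = ∏ i ∈ Finset.range (n - j), (b - (i : ℝ)) :=
          Finset.prod_congr rfl fun i _ => by rw [hb]; ring
        have hga : (∏ i ∈ Finset.range j, (a - (i : ℝ))) * (1 / Real.Gamma (a + 1))
            = 1 / Real.Gamma (a + 1 - j) := by
          refine gkey a j ?_
          by_cases hkl : k' = l
          · exact Or.inr ⟨m, by rw [ha, hkl]; ring⟩
          · refine Or.inl fun i _ hc => ?_
            refine hγ l k' (fun h => hkl h.symm) ((i : ℤ) - m) ?_
            rw [ha] at hc; push_cast; linarith
        have hgb : (∏ i ∈ Finset.range (n - j), (b - (i : ℝ))) * (1 / Real.Gamma (b + 1))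
            = 1 / Real.Gamma (b + 1 - (n - j : ℕ)) := by
          refine gkey b (n - j) ?_
          by_cases hkl : k' = l
          · refine Or.inr ⟨N l - m, ?_⟩
            rw [hb, hkl, Nat.cast_sub hmN]; ring
          · refine Or.inl fun i _ hc => ?_
            refine hγ k' l hkl ((m : ℤ) + i - N k') ?_
            rw [hb] at hc; push_cast; linarith
        have hsplit : (1 : ℝ) / (Real.Gamma (a + 1) * Real.Gamma (b + 1))
            = (1 / Real.Gamma (a + 1)) * (1 / Real.Gamma (b + 1)) := by
          rw [one_div, mul_inv, one_div, one_div]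
        rw [hpa, hpb, hsplit, mul_mul_mul_comm, hga, hgb]
        have e1 : a + 1 - (j : ℝ) = (((m : ℤ) - j : ℤ) : ℝ) + γ l - γ k' + 1 := by
          rw [ha]; push_cast; ring
        have e2 : b + 1 - ((n - j : ℕ) : ℝ)
            = (N k' : ℝ) - n - (((m : ℤ) - j : ℤ) : ℝ) - γ l + γ k' + 1 := by
          rw [hb, Nat.cast_sub hjn]; push_cast; ring
        rw [e1, e2, one_div, one_div, one_div, ← mul_inv]
      have hprod : (∏ k' : Fin r,
            ((∏ i ∈ Finset.range j, ((γ l + m) - γ k' - (i : ℝ))) *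
              ∏ i ∈ Finset.range (n - j), ((N k' : ℝ) - (γ l + m) + γ k' - (i : ℝ)))) *
          (∏ k' : Fin r, (1 / (Real.Gamma ((m : ℝ) + γ l - γ k' + 1) *
            Real.Gamma ((N k' : ℝ) - m - γ l + γ k' + 1))))
          = ∏ k' : Fin r, (1 / (Real.Gamma ((((m : ℤ) - j : ℤ) : ℝ) + γ l - γ k' + 1) *
              Real.Gamma ((N k' : ℝ) - n - (((m : ℤ) - j : ℤ) : ℝ) - γ l + γ k' + 1))) := by
        rw [← Finset.prod_mul_distrib]
        exact Finset.prod_congr rfl fun k' _ => perk k'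
      have hBpow : B ^ m * B ^ (-(j : ℤ)) = B ^ ((m : ℤ) - j) := by
        rw [← zpow_natCast B m, ← zpow_add₀ hB0, ← sub_eq_add_neg]
      calc (-1 : ℝ) ^ j * (n.choose j : ℝ) * B ^ (-(j : ℤ)) *
            (∏ k' : Fin r, ((∏ i ∈ Finset.range j, ((γ l + m) - γ k' - (i : ℝ))) *
              ∏ i ∈ Finset.range (n - j), ((N k' : ℝ) - (γ l + m) + γ k' - (i : ℝ)))) *
            (γ l + m) ^ k * B ^ m *
            (∏ k' : Fin r, (1 / (Real.Gamma ((m : ℝ) + γ l - γ k' + 1) *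
              Real.Gamma ((N k' : ℝ) - m - γ l + γ k' + 1))))
          = ((-1 : ℝ) ^ j * (n.choose j : ℝ)) * ((γ l + m) ^ k *
              ((B ^ m * B ^ (-(j : ℤ))) *
                ((∏ k' : Fin r, ((∏ i ∈ Finset.range j, ((γ l + m) - γ k' - (i : ℝ))) *
                  ∏ i ∈ Finset.range (n - j), ((N k' : ℝ) - (γ l + m) + γ k' - (i : ℝ)))) *
                (∏ k' : Fin r, (1 / (Real.Gamma ((m : ℝ) + γ l - γ k' + 1) *
                  Real.Gamma ((N k' : ℝ) - m - γ l + γ k' + 1))))))) := by ring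
        _ = ((-1 : ℝ) ^ j * (n.choose j : ℝ)) * ((γ l + m) ^ k * G ((m : ℤ) - j)) := by
            rw [hprod, hBpow, hG]
    rw [Finset.sum_congr rfl key]
    rw [Finset.sum_comm]
    have shift : ∀ j ∈ Finset.range (n + 1),
        ∑ m ∈ Finset.range (N l + 1), ((γ l + m) ^ k * G ((m : ℤ) - j))
        = ∑ t ∈ Finset.range (N l - n + 1), ((γ l + ((j + t : ℕ) : ℝ)) ^ k * G (t : ℤ)) := by
      intro j hj
      have hjn : j ≤ n := by have := Finset.mem_range.1 hj; omega
      have hsub : Finset.Ico j (N l - n + 1 + j) ⊆ Finset.range (N l + 1) := by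
        intro m hm
        have := Finset.mem_Ico.1 hm
        have := hnN l
        rw [Finset.mem_range]
        omega
      have hvan : ∀ m ∈ Finset.range (N l + 1), m ∉ Finset.Ico j (N l - n + 1 + j) →
          (γ l + m) ^ k * G ((m : ℤ) - j) = 0 := by
        intro m _ hm
        rw [Finset.mem_Ico] at hm
        push_neg at hm
        by_cases h1 : m < j
        · rw [hGneg ((m : ℤ) - j) (by omega), mul_zero]
        · push_neg at h1
          have h2 := hm h1
          rw [hGbig ((m : ℤ) - j) (by omega), mul_zero]
      rw [← Finset.sum_subset hsub hvan, Finset.sum_Ico_eq_sum_range]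
      have : N l - n + 1 + j - j = N l - n + 1 := by omega
      rw [this]
      refine Finset.sum_congr rfl fun t _ => ?_
      have : ((j + t : ℕ) : ℤ) - (j : ℤ) = (t : ℤ) := by push_cast; ring
      rw [this]
    calc ∑ j ∈ Finset.range (n + 1), ∑ m ∈ Finset.range (N l + 1),
          ((-1 : ℝ) ^ j * (n.choose j : ℝ)) * ((γ l + m) ^ k * G ((m : ℤ) - j))
        = ∑ j ∈ Finset.range (n + 1), ((-1 : ℝ) ^ j * (n.choose j : ℝ)) *
            ∑ m ∈ Finset.range (N l + 1), ((γ l + m) ^ k * G ((m : ℤ) - j)) := by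
          exact Finset.sum_congr rfl fun j _ => (Finset.mul_sum _ _ _).symm
      _ = ∑ j ∈ Finset.range (n + 1), ((-1 : ℝ) ^ j * (n.choose j : ℝ)) *
            ∑ t ∈ Finset.range (N l - n + 1), ((γ l + ((j + t : ℕ) : ℝ)) ^ k * G (t : ℤ)) := by
          exact Finset.sum_congr rfl fun j hj => by rw [shift j hj]
      _ = ∑ t ∈ Finset.range (N l - n + 1), ∑ j ∈ Finset.range (n + 1),
            ((-1 : ℝ) ^ j * (n.choose j : ℝ)) * ((γ l + ((j + t : ℕ) : ℝ)) ^ k * G (t : ℤ)) := by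
          rw [Finset.sum_comm]
          exact Finset.sum_congr rfl fun j _ => Finset.mul_sum _ _ _
      _ = 0 := by
          refine Finset.sum_eq_zero fun t _ => ?_
          have hd : ((X + C (γ l)) ^ k : Polynomial ℝ).degree < (n : ℕ) := by
            rw [Polynomial.degree_pow, Polynomial.degree_X_add_C]
            rw [show (k • (1 : WithBot ℕ)) = (k : WithBot ℕ) by simp]
            exact_mod_cast hk
          have h0 := findiff n ((X + C (γ l)) ^ k) hd (t : ℝ)
          have h0' : ∑ j ∈ Finset.range (n + 1),
              ((-1 : ℝ) ^ j * (n.choose j : ℝ)) * (γ l + ((j + t : ℕ) : ℝ)) ^ k = 0 := by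
            rw [← h0]
            refine Finset.sum_congr rfl fun j _ => ?_
            have : Polynomial.eval ((t : ℝ) + (j : ℝ)) ((X + C (γ l)) ^ k)
                = (γ l + ((j + t : ℕ) : ℝ)) ^ k := by
              simp only [Polynomial.eval_pow, Polynomial.eval_add, Polynomial.eval_X,
                Polynomial.eval_C]
              push_cast
              ring_nf
            rw [this, mul_assoc]
          calc ∑ j ∈ Finset.range (n + 1),
                ((-1 : ℝ) ^ j * (n.choose j : ℝ)) * ((γ l + ((j + t : ℕ) : ℝ)) ^ k * G (t : ℤ))
              = (∑ j ∈ Finset.range (n + 1),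
                  ((-1 : ℝ) ^ j * (n.choose j : ℝ)) * (γ l + ((j + t : ℕ) : ℝ)) ^ k) * G (t : ℤ) := by
                rw [Finset.sum_mul]
                exact Finset.sum_congr rfl fun j _ => by ring
            _ = 0 := by rw [h0', zero_mul]
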